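/- The set {x ∈ X : there exists y ≠ x with (x,y) ∈ Γ_φ or (y,x) ∈ Γ_φ} (the union of all non-degenerate transport rays, i.e. the set T_φ ⊔ B_φ of the paper) is σ-compact. -/
import Mathlib


/-- The union of all non-degenerate transport rays, i.e. the set
`T_φ ⊔ B_φ = {x : ∃ y ≠ x, (x,y) ∈ Γ_φ or (y,x) ∈ Γ_φ}`, is σ-compact. -/
theorem stmt_3 {X : Type*} [TopologicalSpace X] [TopologicalSpace.MetrizableSpace X]
    [SigmaCompactSpace X]
    (d : X → X → ℝ)
    (hd_nonneg : ∀ x y, 0 ≤ d x y)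
    (hd_refl : ∀ x, d x x = 0)
    (hd_tri : ∀ x y z, d x y ≤ d x z + d z y)
    (hd_cont : Continuous fun p : X × X => d p.1 p.2)
    (hd_pos : ∀ x y, d x y = 0 → x = y)
    (φ : X → ℝ) (hφ : ∀ x y, φ y - φ x ≤ d x y) :
    IsSigmaCompact {x : X | ∃ y : X, y ≠ x ∧
      (φ y - φ x = d x y ∨ φ x - φ y = d y x)} := by
  -- φ is continuous (squeeze between continuous bounds)
  have hφ_cont : Continuous φ := by
    rw [continuous_iff_continuousAt]
    intro x
    have h1 : Filter.Tendsto (fun y => φ x - d y x) (nhds x) (nhds (φ x)) := by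
      have : Continuous fun y => φ x - d y x :=
        continuous_const.sub (hd_cont.comp (continuous_id.prodMk continuous_const))
      simpa [ContinuousAt, hd_refl] using this.continuousAt (x := x)
    have h2 : Filter.Tendsto (fun y => φ x + d x y) (nhds x) (nhds (φ x)) := by
      have : Continuous fun y => φ x + d x y :=
        continuous_const.add (hd_cont.comp (continuous_const.prodMk continuous_id))
      simpa [ContinuousAt, hd_refl] using this.continuousAt (x := x)
    exact tendsto_of_tendsto_of_tendsto_of_le_of_le h1 h2
      (fun y => by linarith [hφ y x]) (fun y => by linarith [hφ x y])
  -- the closed sets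
  set C : ℕ → Set (X × X) := fun n => {p : X × X | (n + 1 : ℝ)⁻¹ ≤ d p.1 p.2 ∧
      (φ p.2 - φ p.1 = d p.1 p.2 ∨ φ p.1 - φ p.2 = d p.2 p.1)} with hC
  have hclosed : ∀ n, IsClosed (C n) := by
    intro n
    apply IsClosed.inter
    · exact isClosed_le continuous_const hd_cont
    · apply IsClosed.union
      · exact isClosed_eq (((hφ_cont.comp continuous_snd).sub
          (hφ_cont.comp continuous_fst))) hd_cont
      · exact isClosed_eq (((hφ_cont.comp continuous_fst).sub
          (hφ_cont.comp continuous_snd)))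
          (hd_cont.comp (continuous_snd.prodMk continuous_fst))
  have hset : {x : X | ∃ y : X, y ≠ x ∧
      (φ y - φ x = d x y ∨ φ x - φ y = d y x)} = ⋃ n, Prod.fst '' C n := by
    ext x
    simp only [Set.mem_setOf_eq, Set.mem_iUnion, Set.mem_image]
    constructor
    · rintro ⟨y, hyx, hy⟩
      have hpos : 0 < d x y := by
        rcases lt_or_eq_of_le (hd_nonneg x y) with h | h
        · exact h
        · exact absurd (hd_pos x y h.symm).symm hyx
      obtain ⟨n, hn⟩ := exists_nat_one_div_lt hpos
      refine ⟨n, (x, y), ⟨?_, hy⟩, rfl⟩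
      simp only [one_div] at hn
      exact le_of_lt hn
    · rintro ⟨n, ⟨a, b⟩, ⟨hle, hab⟩, rfl⟩
      refine ⟨b, ?_, hab⟩
      intro hba
      subst hba
      rw [hd_refl] at hle
      have : (0:ℝ) < ((n : ℝ) + 1)⁻¹ := by positivity
      linarith
  rw [hset]
  refine isSigmaCompact_iUnion _ fun n => IsSigmaCompact.image continuous_fst ?_
  exact IsSigmaCompact.of_isClosed_subset isSigmaCompact_univ (hclosed n) (Set.subset_univ _)
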